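/- Let β > 0, L > 0, T > 0. Suppose B : ℝ → ℝ is differentiable along a trajectory, B(0) ≤ (L/β)e^{-βT}, and B'(t) ≤ β B(t) whenever B(t) ≥ (L/β)e^{-βT}, while B'(t) ≤ β B(t) + C for some C ≤ 0 whenever B(t) < (L/β)e^{-βT}. If additionally B'(t) ≤ max(β B(t), β (L/β)e^{-βT}) for all t ∈ [0,T], then B(t) < L/β for all t ∈ [0, T). -/

import Mathlib

open Real Set

/-- Self-contained version of the limited-duration safety theorem. -/
theorem stmt_2 (β L T C : ℝ) (hβ : 0 < β) (hL : 0 < L) (hT : 0 < T) (hC : C ≤ 0)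
    (B : ℝ → ℝ) (hdiff : Differentiable ℝ B)
    (hB0 : B 0 ≤ (L / β) * Real.exp (-β * T))
    (habove : ∀ t : ℝ, (L / β) * Real.exp (-β * T) ≤ B t → deriv B t ≤ β * B t)
    (hbelow : ∀ t : ℝ, B t < (L / β) * Real.exp (-β * T) → deriv B t ≤ β * B t + C)
    (hmax : ∀ t ∈ Set.Icc (0:ℝ) T,
      deriv B t ≤ max (β * B t) (β * ((L / β) * Real.exp (-β * T)))) :
    ∀ t ∈ Set.Ico (0:ℝ) T, B t < L / β := by
  -- In all cases deriv B t ≤ β * B t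
  have hkey : ∀ t : ℝ, deriv B t ≤ β * B t := by
    intro t
    rcases le_or_gt ((L / β) * Real.exp (-β * T)) (B t) with h | h
    · exact habove t h
    · have := hbelow t h; linarith
  set h : ℝ → ℝ := fun t => B t * Real.exp (-β * t) with hh
  have hdiffh : Differentiable ℝ h := by
    apply Differentiable.mul hdiff
    exact (differentiable_exp.comp ((differentiable_const _).mul differentiable_id))
  have hderiv : ∀ t : ℝ, deriv h t = (deriv B t - β * B t) * Real.exp (-β * t) := by
    intro t
    have h1 : HasDerivAt (fun t : ℝ => -β * t) (-β) t := by
      simpa using (hasDerivAt_id t).const_mul (-β)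
    have h2 : HasDerivAt (fun t : ℝ => Real.exp (-β * t)) (Real.exp (-β * t) * (-β)) t :=
      (Real.hasDerivAt_exp _).comp t h1
    have h3 : HasDerivAt B (deriv B t) t := (hdiff t).hasDerivAt
    have := h3.mul h2
    rw [HasDerivAt.deriv (f := h) this]
    ring
  have hanti : Antitone h := by
    apply antitone_of_deriv_nonpos hdiffh
    intro t
    rw [hderiv t]
    have := hkey t
    nlinarith [Real.exp_pos (-β * t)]
  intro t ht
  obtain ⟨ht0, htT⟩ := ht
  have h1 : h t ≤ h 0 := hanti ht0
  have h2 : h 0 = B 0 := by simp [hh]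
  have h3 : B t * Real.exp (-β * t) ≤ (L / β) * Real.exp (-β * T) := by
    calc B t * Real.exp (-β * t) = h t := rfl
      _ ≤ h 0 := h1
      _ = B 0 := h2
      _ ≤ _ := hB0
  have hexp : Real.exp (-β * T) < Real.exp (-β * t) := by
    apply Real.exp_lt_exp.mpr; nlinarith
  have hLβ : 0 < L / β := div_pos hL hβ
  by_contra hcon
  push_neg at hcon
  nlinarith [Real.exp_pos (-β * t), Real.exp_pos (-β * T)]
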